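/- Let X be an infinite subset of Zar(F). Then the union over all cofinite subsets Y of X of the rings A(Y) = ⋂_{V∈Y} V equals A(lim X) = ⋂_{U ∈ lim X} U, where lim X is the set of patch limit points of X in Zar(F). -/

import Mathlib

open Set

/-- A subring `V` of a field `F` is a valuation ring of `F` (with quotient field `F`). -/
def IsValSubring (F : Type*) [Field F] (V : Subring F) : Prop :=
  ∀ t : F, t ≠ 0 → t ∈ V ∨ t⁻¹ ∈ V

/-- The Zariski-Riemann space of the field `F`: the set of valuation rings of `F`. -/
def Zar (F : Type*) [Field F] : Type _ := {V : Subring F // IsValSubring F V}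

/-- The patch (constructible) topology on `Zar F`, generated by the sets
`{V : x ∈ V}` and `{V : y ∉ V}` for `x, y ∈ F`. -/
instance Zar.patchTopology (F : Type*) [Field F] : TopologicalSpace (Zar F) :=
  TopologicalSpace.generateFrom
    ({S | ∃ x : F, S = {V : Zar F | x ∈ V.1}} ∪ {S | ∃ y : F, S = {V : Zar F | y ∉ V.1}})

variable {F : Type*} [Field F]

/-- The maximal ideal of a valuation ring of `F`, as a subset of `F`. -/
def mIdeal (V : Zar F) : Set F := {x : F | x ∈ V.1 ∧ (x = 0 ∨ x⁻¹ ∉ V.1)}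

/-- `A(X)`: the intersection of the valuation rings in `X`, as a subset of `F`. -/
def aSet (X : Set (Zar F)) : Set F := ⋂ V ∈ X, ((V : Zar F).1 : Set F)

/-- `A(X)` as a subring of `F`. -/
def ASub (X : Set (Zar F)) : Subring F := ⨅ V ∈ X, (V : Zar F).1

/-- `J(X)`: the intersection of the maximal ideals of the valuation rings in `X`. -/
def jSet (X : Set (Zar F)) : Set F := ⋂ V ∈ X, mIdeal V

/-- The set of limit points of `X` in the patch topology of `Zar F`. -/
def limPts (X : Set (Zar F)) : Set (Zar F) :=
  {V : Zar F | ∀ U : Set (Zar F), IsOpen U → V ∈ U → ∃ W ∈ X, W ≠ V ∧ W ∈ U}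

/-! ### Auxiliary material -/

lemma isOpen_memSet (x : F) : IsOpen {V : Zar F | x ∈ V.1} :=
  TopologicalSpace.isOpen_generateFrom_of_mem (Or.inl ⟨x, rfl⟩)

lemma isOpen_notMemSet (x : F) : IsOpen {V : Zar F | x ∉ V.1} :=
  TopologicalSpace.isOpen_generateFrom_of_mem (Or.inr ⟨x, rfl⟩)

open Classical in
/-- The natural map from `Zar F` into `F → Bool`. -/
noncomputable def zarEmb (F : Type*) [Field F] : Zar F → (F → Bool) :=
  fun V x => decide (x ∈ V.1)

lemma zarEmb_eq_true_iff {V : Zar F} {x : F} : zarEmb F V x = true ↔ x ∈ V.1 := by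
  simp [zarEmb]

lemma zarEmb_eq_false_iff {V : Zar F} {x : F} : zarEmb F V x = false ↔ x ∉ V.1 := by
  simp [zarEmb]

lemma continuous_zarEmb : Continuous (zarEmb F) := by
  apply continuous_pi
  intro x
  rw [continuous_def]
  intro s _
  by_cases ht : true ∈ s <;> by_cases hf : false ∈ s
  · have : (fun V : Zar F => zarEmb F V x) ⁻¹' s = univ := by
      ext V
      simp only [mem_preimage, mem_univ, iff_true]
      cases h : zarEmb F V x
      · rwa [h] at *
      · rwa [h] at *
    rw [this]; exact isOpen_univ
  · have : (fun V : Zar F => zarEmb F V x) ⁻¹' s = {V : Zar F | x ∈ V.1} := by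
      ext V
      simp only [mem_preimage, mem_setOf_eq]
      constructor
      · intro h
        by_contra hx
        rw [zarEmb_eq_false_iff.mpr hx] at h
        exact hf h
      · intro h
        rw [zarEmb_eq_true_iff.mpr h]
        exact ht
    rw [this]; exact isOpen_memSet x
  · have : (fun V : Zar F => zarEmb F V x) ⁻¹' s = {V : Zar F | x ∉ V.1} := by
      ext V
      simp only [mem_preimage, mem_setOf_eq]
      constructor
      · intro h
        intro hx
        rw [zarEmb_eq_true_iff.mpr hx] at h
        exact ht h
      · intro h
        rw [zarEmb_eq_false_iff.mpr h]
        exact hf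
    rw [this]; exact isOpen_notMemSet x
  · have : (fun V : Zar F => zarEmb F V x) ⁻¹' s = ∅ := by
      ext V
      simp only [mem_preimage, mem_empty_iff_false, iff_false]
      intro h
      cases hv : zarEmb F V x
      · rw [hv] at h; exact hf h
      · rw [hv] at h; exact ht h
    rw [this]; exact isOpen_empty

lemma isInducing_zarEmb : Topology.IsInducing (zarEmb (F := F)) := by
  refine ⟨le_antisymm (continuous_iff_le_induced.mp continuous_zarEmb) (le_generateFrom ?_)⟩
  rintro s (⟨x, rfl⟩ | ⟨x, rfl⟩)
  · refine isOpen_induced_iff.mpr ⟨(fun f : F → Bool => f x) ⁻¹' {true},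
      (continuous_apply x).isOpen_preimage _ (isOpen_discrete _), ?_⟩
    ext V; simp [zarEmb]
  · refine isOpen_induced_iff.mpr ⟨(fun f : F → Bool => f x) ⁻¹' {false},
      (continuous_apply x).isOpen_preimage _ (isOpen_discrete _), ?_⟩
    ext V; simp [zarEmb]

/-- The ring-theoretic conditions cutting out the image of `zarEmb`. -/
def GoodF (F : Type*) [Field F] (f : F → Bool) : Prop :=
  f 1 = true ∧ (∀ x y : F, f x = true → f y = true → f (x + y) = true) ∧
  (∀ x y : F, f x = true → f y = true → f (x * y) = true) ∧
  (∀ x : F, f x = true → f (-x) = true) ∧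
  (∀ t : F, t ≠ 0 → f t = true ∨ f t⁻¹ = true)

lemma isClosed_goodF : IsClosed {f : F → Bool | GoodF F f} := by
  have heq : {f : F → Bool | GoodF F f} =
      ((fun f : F → Bool => f 1) ⁻¹' {true}) ∩
      ((⋂ x : F, ⋂ y : F, (fun f : F → Bool => (f x, f y, f (x + y))) ⁻¹'
        {p : Bool × Bool × Bool | p.1 = true → p.2.1 = true → p.2.2 = true}) ∩
      ((⋂ x : F, ⋂ y : F, (fun f : F → Bool => (f x, f y, f (x * y))) ⁻¹'
        {p : Bool × Bool × Bool | p.1 = true → p.2.1 = true → p.2.2 = true}) ∩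
      ((⋂ x : F, (fun f : F → Bool => (f x, f (-x))) ⁻¹'
        {p : Bool × Bool | p.1 = true → p.2 = true}) ∩
      (⋂ t : F, (fun f : F → Bool => (f t, f t⁻¹)) ⁻¹'
        {p : Bool × Bool | t = 0 ∨ p.1 = true ∨ p.2 = true})))) := by
    ext f
    simp only [GoodF, mem_setOf_eq, mem_inter_iff, mem_iInter, mem_preimage,
      mem_singleton_iff]
    constructor
    · rintro ⟨h1, h2, h3, h4, h5⟩
      exact ⟨h1, fun x y => h2 x y, fun x y => h3 x y, fun x => h4 x,
        fun t => by
          by_cases ht : t = 0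
          · exact Or.inl ht
          · exact Or.inr (h5 t ht)⟩
    · rintro ⟨h1, h2, h3, h4, h5⟩
      refine ⟨h1, fun x y => h2 x y, fun x y => h3 x y, fun x => h4 x, fun t ht => ?_⟩
      rcases h5 t with h | h
      · exact absurd h ht
      · exact h
  rw [heq]
  refine IsClosed.inter (IsClosed.preimage (continuous_apply 1) (isClosed_discrete _))
    (IsClosed.inter (isClosed_iInter fun x => isClosed_iInter fun y =>
      IsClosed.preimage (by continuity) (isClosed_discrete _))
    (IsClosed.inter (isClosed_iInter fun x => isClosed_iInter fun y =>
      IsClosed.preimage (by continuity) (isClosed_discrete _))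
    (IsClosed.inter (isClosed_iInter fun x =>
      IsClosed.preimage (by continuity) (isClosed_discrete _))
    (isClosed_iInter fun t =>
      IsClosed.preimage (by continuity) (isClosed_discrete _)))))

lemma range_zarEmb : Set.range (zarEmb (F := F)) = {f : F → Bool | GoodF F f} := by
  apply Subset.antisymm
  · rintro _ ⟨V, rfl⟩
    refine ⟨zarEmb_eq_true_iff.mpr V.1.one_mem,
      fun x y hx hy => zarEmb_eq_true_iff.mpr
        (V.1.add_mem (zarEmb_eq_true_iff.mp hx) (zarEmb_eq_true_iff.mp hy)),
      fun x y hx hy => zarEmb_eq_true_iff.mpr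
        (V.1.mul_mem (zarEmb_eq_true_iff.mp hx) (zarEmb_eq_true_iff.mp hy)),
      fun x hx => zarEmb_eq_true_iff.mpr (V.1.neg_mem (zarEmb_eq_true_iff.mp hx)),
      fun t ht => ?_⟩
    rcases V.2 t ht with h | h
    · exact Or.inl (zarEmb_eq_true_iff.mpr h)
    · exact Or.inr (zarEmb_eq_true_iff.mpr h)
  · rintro f ⟨h1, hadd, hmul, hneg, hval⟩
    have h0 : f 0 = true := by
      have hm1 : f (-1) = true := hneg 1 h1
      have := hadd 1 (-1) h1 hm1
      simpa using this
    refine ⟨⟨{ carrier := {x : F | f x = true}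
               one_mem' := h1
               mul_mem' := fun ha hb => hmul _ _ ha hb
               add_mem' := fun ha hb => hadd _ _ ha hb
               zero_mem' := h0
               neg_mem' := fun ha => hneg _ ha }, fun t ht => hval t ht⟩, ?_⟩
    funext x
    cases hfx : f x
    · refine zarEmb_eq_false_iff.mpr fun hmem => ?_
      have : f x = true := hmem
      simp [hfx] at this
    · exact zarEmb_eq_true_iff.mpr hfx

instance : CompactSpace (Zar F) := by
  constructor
  rw [isInducing_zarEmb.isCompact_iff, image_univ, range_zarEmb]
  exact isClosed_goodF.isCompact

instance : T1Space (Zar F) := by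
  rw [t1Space_iff_exists_open]
  intro V W hVW
  have hx : ∃ x : F, ¬(x ∈ V.1 ↔ x ∈ W.1) := by
    by_contra h
    push_neg at h
    exact hVW (Subtype.ext (SetLike.ext fun x => h x))
  obtain ⟨x, hx⟩ := hx
  by_cases hxV : x ∈ V.1
  · have hxW : x ∉ W.1 := fun h => hx ⟨fun _ => h, fun _ => hxV⟩
    exact ⟨{Z : Zar F | x ∈ Z.1}, isOpen_memSet x, hxV, hxW⟩
  · have hxW : x ∈ W.1 := by
      by_contra h
      exact hx ⟨fun h' => absurd h' hxV, fun h' => absurd h' h⟩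
    exact ⟨{Z : Zar F | x ∉ Z.1}, isOpen_notMemSet x, hxV, fun h => h hxW⟩

lemma limPts_inter_infinite {X : Set (Zar F)} {V : Zar F} (hV : V ∈ limPts X)
    {U : Set (Zar F)} (hU : IsOpen U) (hVU : V ∈ U) : (X ∩ U).Infinite := by
  intro hfin
  have hcl : IsClosed ((X ∩ U) \ {V}) := (hfin.diff : ((X ∩ U) \ {V}).Finite).isClosed
  have hUo : IsOpen (U \ ((X ∩ U) \ {V})) := hU.sdiff hcl
  have hVm : V ∈ U \ ((X ∩ U) \ {V}) := ⟨hVU, fun h => h.2 rfl⟩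
  obtain ⟨W, hWX, hWV, hWU⟩ := hV _ hUo hVm
  exact hWU.2 ⟨⟨hWX, hWU.1⟩, by simpa using hWV⟩

lemma accPt_mem_limPts {X : Set (Zar F)} {V : Zar F} (h : AccPt V (Filter.principal X)) :
    V ∈ limPts X := by
  intro U hU hVU
  obtain ⟨y, ⟨hyU, hyX⟩, hyV⟩ := accPt_iff_nhds.mp h U (hU.mem_nhds hVU)
  exact ⟨y, hyX, hyV, hyU⟩

theorem stmt1 (X : Set (Zar F)) (hX : X.Infinite) :
    (⋃ Y ∈ {Y : Set (Zar F) | Y ⊆ X ∧ (X \ Y).Finite}, aSet Y) = aSet (limPts X) := by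
  apply Subset.antisymm
  · intro t ht
    obtain ⟨Y, ⟨hYX, hfin⟩, htY⟩ := mem_iUnion₂.mp ht
    refine mem_iInter₂.mpr fun V hV => ?_
    by_contra htV
    have hinf := limPts_inter_infinite hV (isOpen_notMemSet t) htV
    have hsub : X ∩ {W : Zar F | t ∉ W.1} ⊆ X \ Y :=
      fun W hW => ⟨hW.1, fun hWY => hW.2 (mem_iInter₂.mp htY W hWY)⟩
    exact hinf (hfin.subset hsub)
  · intro t ht
    set Y := {V ∈ X | t ∈ V.1} with hYdef
    have hfin : (X \ Y).Finite := by
      by_contra hinf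
      have hinf' : (X \ Y).Infinite := hinf
      obtain ⟨V, hV⟩ := hinf'.exists_accPt_principal
      have hVlim : V ∈ limPts (X \ Y) := accPt_mem_limPts hV
      have hVlimX : V ∈ limPts X := fun U hU hVU =>
        let ⟨W, hW, h1, h2⟩ := hVlim U hU hVU; ⟨W, hW.1, h1, h2⟩
      have htV : t ∈ V.1 := mem_iInter₂.mp ht V hVlimX
      obtain ⟨W, hWXY, _, hWU⟩ := hVlim {Z : Zar F | t ∈ Z.1} (isOpen_memSet t) htV
      exact hWXY.2 ⟨hWXY.1, hWU⟩
    exact mem_iUnion₂.mpr ⟨Y, ⟨fun V hV => hV.1, hfin⟩,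
      mem_iInter₂.mpr fun V hV => hV.2⟩
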